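/- Let f : 2^N → ℝ be a non-negative submodular set function on a finite set N, let T ⊆ N, let p ∈ [0,1], and let μ be a probability mass function on the subsets of N (μ(A) ≥ 0 for all A ⊆ N and Σ_{A ⊆ N} μ(A) = 1) such that every element u ∈ N satisfies Σ_{A ⊆ N, u ∈ A} μ(A) ≤ p. Then Σ_{A ⊆ N} μ(A) · f(A ∪ T) ≥ (1 − p) · f(T). -/
import Mathlib


open scoped Classical

/-- A matroid on a finite ground set, given by its independent sets. -/
structure FinMatroid (α : Type*) [Fintype α] [DecidableEq α] where
  Indep : Finset α → Prop
  indep_empty : Indep ∅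
  indep_subset : ∀ ⦃S T : Finset α⦄, Indep T → S ⊆ T → Indep S
  indep_exchange : ∀ ⦃S T : Finset α⦄, Indep S → Indep T → S.card < T.card →
    ∃ u ∈ T \ S, Indep (insert u S)

variable {α : Type*} [Fintype α] [DecidableEq α]

/-- The rank of a set `A`: the maximum size of an independent subset of `A`. -/
noncomputable def FinMatroid.rank (M : FinMatroid α) (A : Finset α) : ℕ :=
  (A.powerset.filter fun S => M.Indep S).sup Finset.card

/-- A base of a matroid: an inclusion-wise maximal independent set. -/
def FinMatroid.IsBase (M : FinMatroid α) (B : Finset α) : Prop :=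
  M.Indep B ∧ ∀ T : Finset α, M.Indep T → B ⊆ T → T = B

/-- The extended multilinear extension of a set function `f`, evaluated at a
vector `y` with one coordinate for each subset of the ground set. -/
noncomputable def extMulti (f : Finset α → ℝ) (y : Finset α → ℝ) : ℝ :=
  ∑ J : Finset (Finset α), f (J.sup id) * ((∏ S ∈ J, y S) * ∏ S ∈ Jᶜ, (1 - y S))

/-- The standard multilinear extension of a set function `f`. -/
noncomputable def stdMulti (f : Finset α → ℝ) (x : α → ℝ) : ℝ :=
  ∑ S : Finset α, f S * ((∏ u ∈ S, x u) * ∏ u ∈ Sᶜ, (1 - x u))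

/-- The marginal vector of `y`: `marg y u = 1 - ∏_{S ∋ u} (1 - y S)`. -/
noncomputable def marg (y : Finset α → ℝ) (u : α) : ℝ :=
  1 - ∏ S ∈ Finset.univ.filter (fun S : Finset α => u ∈ S), (1 - y S)

/-- The characteristic vector of the coordinate indexed by the set `A`. -/
def chi (A : Finset α) : Finset α → ℝ := fun S => if S = A then 1 else 0

/-- The coordinate-wise probabilistic sum of two vectors. -/
def psum {ι : Type*} (a b : ι → ℝ) : ι → ℝ := fun i => 1 - (1 - a i) * (1 - b i)

/-- Membership of `x` in the matroid polytope `P(M)`. -/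
def inMatroidPolytope (M : FinMatroid α) (x : α → ℝ) : Prop :=
  (∀ u, 0 ≤ x u) ∧ ∀ A : Finset α, ∑ u ∈ A, x u ≤ (M.rank A : ℝ)

theorem expected_union_lower_bound (f : Finset α → ℝ)
    (hf_nonneg : ∀ S, 0 ≤ f S)
    (hf_submod : ∀ S T : Finset α, f (S ∪ T) + f (S ∩ T) ≤ f S + f T)
    (T : Finset α) (p : ℝ) (hp0 : 0 ≤ p) (hp1 : p ≤ 1)
    (μ : Finset α → ℝ) (hμ_nonneg : ∀ A, 0 ≤ μ A)
    (hμ_sum : ∑ A : Finset α, μ A = 1)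
    (hμ_marg : ∀ u : α,
      ∑ A ∈ Finset.univ.filter (fun A : Finset α => u ∈ A), μ A ≤ p) :
    (1 - p) * f T ≤ ∑ A : Finset α, μ A * f (A ∪ T) := by
  set x : α → ℝ := fun u => ∑ A ∈ Finset.univ.filter (fun A : Finset α => u ∈ A), μ A with hxdef
  have hx0 : ∀ u, 0 ≤ x u := fun u => Finset.sum_nonneg (fun A _ => hμ_nonneg A)
  have hxcompl : ∀ u : α, ∑ A ∈ Finset.univ.filter (fun A : Finset α => u ∉ A), μ A = 1 - x u := by
    intro u
    have := Finset.sum_filter_add_sum_filter_not (Finset.univ : Finset (Finset α))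
      (fun A : Finset α => u ∈ A) μ
    rw [hμ_sum] at this
    simp only [hxdef]
    linarith
  have key : ∀ s : Finset α, ∀ q : ℝ, 0 ≤ q → q ≤ 1 → (∀ u ∈ s, x u ≤ q) →
      (1 - q) * f (sᶜ ∪ T) ≤ ∑ A : Finset α, μ A * f (A ∪ sᶜ ∪ T) := by
    intro s
    induction s using Finset.strongInduction with
    | _ s ih =>
      intro q hq0 hq1 hxq
      rcases s.eq_empty_or_nonempty with rfl | hs
      · have heq : ∀ A : Finset α, A ∪ (∅ : Finset α)ᶜ ∪ T = (∅ : Finset α)ᶜ ∪ T := by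
          intro A
          ext v; simp [Finset.compl_empty]
        rw [Finset.sum_congr rfl (fun A _ => by rw [heq A]), ← Finset.sum_mul, hμ_sum, one_mul]
        nlinarith [hf_nonneg ((∅ : Finset α)ᶜ ∪ T)]
      · obtain ⟨u, hu, hmax⟩ := s.exists_max_image x hs
        set s' := s.erase u with hs'
        have hsub : s' ⊂ s := Finset.erase_ssubset hu
        have hcompl : s'ᶜ = insert u sᶜ := by
          rw [hs', Finset.compl_erase]
        have hxu1 : x u ≤ 1 := le_trans (hxq u hu) hq1
        have IH : (1 - x u) * f (s'ᶜ ∪ T) ≤ ∑ A : Finset α, μ A * f (A ∪ s'ᶜ ∪ T) :=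
          ih s' hsub (x u) (hx0 u) hxu1 (fun v hv => hmax v (Finset.mem_of_mem_erase hv))
        -- for A containing u, the two unions agree
        have h1 : ∀ A : Finset α, u ∈ A → A ∪ s'ᶜ ∪ T = A ∪ sᶜ ∪ T := by
          intro A hA
          rw [hcompl]
          ext v
          simp only [Finset.mem_union, Finset.mem_insert]
          constructor
          · rintro ((hv | (rfl | hv)) | hv) <;> tauto
          · tauto
        -- for A not containing u, submodularity gives the marginal bound
        have h2 : ∀ A : Finset α, u ∉ A →
            f (A ∪ s'ᶜ ∪ T) + f (sᶜ ∪ T) ≤ f (A ∪ sᶜ ∪ T) + f (s'ᶜ ∪ T) := by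
          intro A hA
          have hU : (A ∪ sᶜ ∪ T) ∪ (s'ᶜ ∪ T) = A ∪ s'ᶜ ∪ T := by
            rw [hcompl]
            ext v
            simp only [Finset.mem_union, Finset.mem_insert]
            tauto
          have hI : (A ∪ sᶜ ∪ T) ∩ (s'ᶜ ∪ T) = sᶜ ∪ T := by
            rw [hcompl]
            ext v
            simp only [Finset.mem_inter, Finset.mem_union, Finset.mem_insert]
            constructor
            · rintro ⟨(hv | hv) | hv, (rfl | hv') | hv'⟩ <;> tauto
            · intro hv
              have hvs : v ∈ sᶜ ∨ v ∈ T := by tauto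
              rcases hvs with hv' | hv' <;> tauto
          have := hf_submod (A ∪ sᶜ ∪ T) (s'ᶜ ∪ T)
          rw [hU, hI] at this
          linarith
        -- pointwise lower bound on each summand
        have hpoint : ∀ A : Finset α,
            μ A * f (A ∪ s'ᶜ ∪ T) + μ A * (if u ∈ A then 0 else f (sᶜ ∪ T) - f (s'ᶜ ∪ T))
              ≤ μ A * f (A ∪ sᶜ ∪ T) := by
          intro A
          by_cases hA : u ∈ A
          · simp only [hA, if_true, mul_zero, add_zero, h1 A hA, le_refl]
          · simp only [hA, if_false]
            have := h2 A hA
            have hμA := hμ_nonneg A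
            nlinarith
        have hsum : ∑ A : Finset α, (μ A * f (A ∪ s'ᶜ ∪ T)
              + μ A * (if u ∈ A then 0 else f (sᶜ ∪ T) - f (s'ᶜ ∪ T)))
            ≤ ∑ A : Finset α, μ A * f (A ∪ sᶜ ∪ T) :=
          Finset.sum_le_sum (fun A _ => hpoint A)
        rw [Finset.sum_add_distrib] at hsum
        have hsplit : ∑ A : Finset α, μ A * (if u ∈ A then 0 else f (sᶜ ∪ T) - f (s'ᶜ ∪ T))
            = (1 - x u) * (f (sᶜ ∪ T) - f (s'ᶜ ∪ T)) := by
          rw [← hxcompl u, Finset.sum_mul]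
          rw [Finset.sum_filter]
          apply Finset.sum_congr rfl
          intro A _
          by_cases hA : u ∈ A <;> simp [hA]
        rw [hsplit] at hsum
        have hfc : 0 ≤ f (sᶜ ∪ T) := hf_nonneg _
        have hxuq : x u ≤ q := hxq u hu
        nlinarith [IH, hsum]
  have := key Finset.univ p hp0 hp1 (fun u _ => hμ_marg u)
  simpa using this
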